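/- arXiv:1907.01584 — 4 statements merged into one kernel-verified Lean document; each statement's English description precedes it below -/
import Mathlib

section
/- Hardy's inequality, first case: Let 1 ≤ p < ∞ and r > 1, and let f : (0,∞) → [0,∞) be a measurable function. Define F(x) = ∫₀ˣ f(t) dt. Then ∫₀^∞ x^{-r} F(x)^p dx ≤ (p/(r−1))^p · ∫₀^∞ x^{-r} (x·f(x))^p dx. -/
open MeasureTheory Set

lemma lint_Ioo_rpow {c : ℝ} (hc : -1 < c) {x : ℝ} (hx : 0 < x) :
    ∫⁻ t in Ioo (0:ℝ) x, ENNReal.ofReal (t ^ c) = ENNReal.ofReal (x ^ (c+1) / (c+1)) := by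
  have hint : IntegrableOn (fun t : ℝ => t ^ c) (Ioo 0 x) := by
    have := (intervalIntegrable_iff_integrableOn_Ioc_of_le hx.le).mp
      (intervalIntegral.intervalIntegrable_rpow' hc (a := 0) (b := x))
    exact this.mono_set Ioo_subset_Ioc_self
  rw [← ofReal_integral_eq_lintegral_ofReal hint]
  · congr 1
    rw [← integral_Ioc_eq_integral_Ioo, ← intervalIntegral.integral_of_le hx.le,
      integral_rpow (Or.inl hc)]
    rw [Real.zero_rpow (by linarith)]
    ring
  · filter_upwards [ae_restrict_mem measurableSet_Ioo] with t ht
    exact Real.rpow_nonneg ht.1.le c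

lemma lint_Ioi_rpow {c : ℝ} (hc : c < -1) {t : ℝ} (ht : 0 < t) :
    ∫⁻ x in Ioi t, ENNReal.ofReal (x ^ c) = ENNReal.ofReal (t ^ (c+1) / (-(c+1))) := by
  rw [← ofReal_integral_eq_lintegral_ofReal (integrableOn_Ioi_rpow_of_lt hc ht)]
  · rw [integral_Ioi_rpow_of_lt hc ht]
    rw [div_neg, neg_div]
  · filter_upwards [ae_restrict_mem measurableSet_Ioi] with x hx
    exact Real.rpow_nonneg (ht.trans hx).le c

lemma hardy_swap (w g : ℝ → ENNReal) (hw : Measurable w) (hg : Measurable g) :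
    ∫⁻ x in Ioi (0:ℝ), w x * ∫⁻ t in Ioo (0:ℝ) x, g t
      = ∫⁻ t in Ioi (0:ℝ), g t * ∫⁻ x in Ioi t, w x := by
  set S : Set (ℝ × ℝ) := {q | q.2 < q.1} with hS
  have hSm : MeasurableSet S := measurableSet_lt measurable_snd measurable_fst
  have hk : Measurable fun q : ℝ × ℝ => w q.1 * g q.2 * S.indicator 1 q :=
    ((hw.comp measurable_fst).mul (hg.comp measurable_snd)).mul
      (measurable_const.indicator hSm)
  have stepA : ∀ x ∈ Ioi (0:ℝ), w x * ∫⁻ t in Ioo (0:ℝ) x, g t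
      = ∫⁻ t in Ioi (0:ℝ), w x * g t * S.indicator 1 (x, t) := by
    intro x _
    have : ∀ t : ℝ, w x * g t * S.indicator 1 (x, t)
        = w x * (Iio x).indicator g t := by
      intro t
      by_cases h : t < x
      · simp [hS, Set.indicator_of_mem, h, mul_assoc]
      · simp [hS, Set.indicator_of_notMem, h, mt Set.mem_Iio.mp h]
    simp_rw [this]
    rw [lintegral_const_mul _ (hg.indicator measurableSet_Iio)]
    congr 1
    rw [lintegral_indicator measurableSet_Iio, Measure.restrict_restrict measurableSet_Iio]
    congr 1
    rw [Set.inter_comm, Set.Ioi_inter_Iio]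
  have stepB : ∀ t ∈ Ioi (0:ℝ), g t * ∫⁻ x in Ioi t, w x
      = ∫⁻ x in Ioi (0:ℝ), w x * g t * S.indicator 1 (x, t) := by
    intro t ht
    have : ∀ x : ℝ, w x * g t * S.indicator 1 (x, t)
        = g t * (Ioi t).indicator w x := by
      intro x
      by_cases h : t < x
      · simp [hS, Set.indicator_of_mem, h, Set.mem_Ioi.mpr h]; ring
      · simp [hS, Set.indicator_of_notMem, h, mt Set.mem_Ioi.mp h]
    simp_rw [this]
    rw [lintegral_const_mul _ (hw.indicator measurableSet_Ioi)]
    congr 1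
    rw [lintegral_indicator measurableSet_Ioi, Measure.restrict_restrict measurableSet_Ioi]
    congr 1
    rw [Set.inter_eq_left.mpr (Ioi_subset_Ioi (le_of_lt ht))]
  calc ∫⁻ x in Ioi (0:ℝ), w x * ∫⁻ t in Ioo (0:ℝ) x, g t
      = ∫⁻ x in Ioi (0:ℝ), ∫⁻ t in Ioi (0:ℝ), w x * g t * S.indicator 1 (x, t) :=
        setLIntegral_congr_fun measurableSet_Ioi stepA
    _ = ∫⁻ t in Ioi (0:ℝ), ∫⁻ x in Ioi (0:ℝ), w x * g t * S.indicator 1 (x, t) :=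
        lintegral_lintegral_swap hk.aemeasurable
    _ = ∫⁻ t in Ioi (0:ℝ), g t * ∫⁻ x in Ioi t, w x :=
        (setLIntegral_congr_fun measurableSet_Ioi stepB).symm

lemma hardy_key (p r : ℝ) (hp : 1 ≤ p) (hr : 1 < r) (f : ℝ → ENNReal) (hf : Measurable f)
    {x : ℝ} (hx : 0 < x) :
    (∫⁻ t in Ioo (0:ℝ) x, f t) ^ p ≤
      (∫⁻ t in Ioo (0:ℝ) x, f t ^ p * ENNReal.ofReal (t ^ ((1-(r-1)/p)*(p-1)))) *
        ENNReal.ofReal ((x ^ ((r-1)/p) / ((r-1)/p)) ^ (p-1)) := by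
  have hp0 : 0 < p := lt_of_lt_of_le one_pos hp
  set ε : ℝ := (r-1)/p with hε
  have hεpos : 0 < ε := div_pos (by linarith) hp0
  rcases eq_or_lt_of_le hp with hp1 | hp1
  · subst hp1
    simp [Real.rpow_zero, ENNReal.rpow_one]
  -- p > 1
  set q : ℝ := p / (p-1) with hq
  have hpq : p.HolderConjugate q := Real.HolderConjugate.conjExponent hp1
  set s : ℝ := (1-ε)*(p-1)/p with hs
  have hpne : p ≠ 0 := hp0.ne'
  have hpm1 : p - 1 ≠ 0 := by linarith
  have hsp : s * p = (1-ε)*(p-1) := by rw [hs]; field_simp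
  have hsq : -s * q = ε - 1 := by
    rw [hs, hq, hε]; field_simp; ring
  set φ : ℝ → ENNReal := fun t => f t * ENNReal.ofReal (t ^ s) with hφdef
  set ψ : ℝ → ENNReal := fun t => ENNReal.ofReal (t ^ (-s)) with hψdef
  have hφ : Measurable φ := hf.mul ((by measurability : Measurable fun t : ℝ => t ^ s).ennreal_ofReal)
  have hψ : Measurable ψ := (by measurability : Measurable fun t : ℝ => t ^ (-s)).ennreal_ofReal
  have step1 : ∫⁻ t in Ioo (0:ℝ) x, f t = ∫⁻ t in Ioo (0:ℝ) x, (φ * ψ) t := by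
    refine setLIntegral_congr_fun measurableSet_Ioo (fun t ht => ?_)
    show f t = f t * ENNReal.ofReal (t ^ s) * ENNReal.ofReal (t ^ (-s))
    rw [mul_assoc, ← ENNReal.ofReal_mul (Real.rpow_nonneg ht.1.le _),
      ← Real.rpow_add ht.1, add_neg_cancel, Real.rpow_zero, ENNReal.ofReal_one, mul_one]
  have step2 := ENNReal.lintegral_mul_le_Lp_mul_Lq (volume.restrict (Ioo (0:ℝ) x)) hpq
    hφ.aemeasurable hψ.aemeasurable
  rw [← step1] at step2
  have hA : ∫⁻ t in Ioo (0:ℝ) x, φ t ^ p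
      = ∫⁻ t in Ioo (0:ℝ) x, f t ^ p * ENNReal.ofReal (t ^ ((1-ε)*(p-1))) := by
    refine setLIntegral_congr_fun measurableSet_Ioo (fun t ht => ?_)
    show (f t * ENNReal.ofReal (t ^ s)) ^ p = _
    rw [ENNReal.mul_rpow_of_nonneg _ _ hp0.le, ENNReal.ofReal_rpow_of_pos
      (Real.rpow_pos_of_pos ht.1 s), ← Real.rpow_mul ht.1.le, hsp]
  have hB : ∫⁻ t in Ioo (0:ℝ) x, ψ t ^ q = ENNReal.ofReal (x ^ ε / ε) := by
    have heq : ∫⁻ t in Ioo (0:ℝ) x, ψ t ^ q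
        = ∫⁻ t in Ioo (0:ℝ) x, ENNReal.ofReal (t ^ (ε - 1)) := by
      refine setLIntegral_congr_fun measurableSet_Ioo (fun t ht => ?_)
      show ENNReal.ofReal (t ^ (-s)) ^ q = _
      rw [ENNReal.ofReal_rpow_of_pos (Real.rpow_pos_of_pos ht.1 _),
        ← Real.rpow_mul ht.1.le, hsq]
    rw [heq, lint_Ioo_rpow (by linarith) hx]
    congr 2 <;> ring
  calc (∫⁻ t in Ioo (0:ℝ) x, f t) ^ p
      ≤ ((∫⁻ t in Ioo (0:ℝ) x, φ t ^ p) ^ (1/p)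
          * (∫⁻ t in Ioo (0:ℝ) x, ψ t ^ q) ^ (1/q)) ^ p :=
        ENNReal.rpow_le_rpow step2 hp0.le
    _ = (∫⁻ t in Ioo (0:ℝ) x, φ t ^ p) ^ ((1/p)*p)
          * (∫⁻ t in Ioo (0:ℝ) x, ψ t ^ q) ^ ((1/q)*p) := by
        rw [ENNReal.mul_rpow_of_nonneg _ _ hp0.le, ← ENNReal.rpow_mul, ← ENNReal.rpow_mul]
    _ = (∫⁻ t in Ioo (0:ℝ) x, f t ^ p * ENNReal.ofReal (t ^ ((1-ε)*(p-1))))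
          * ENNReal.ofReal ((x ^ ε / ε) ^ (p-1)) := by
        rw [one_div_mul_cancel hpne, ENNReal.rpow_one, hA, hB,
          show (1/q)*p = p/q by ring, hpq.div_conj_eq_sub_one,
          ENNReal.ofReal_rpow_of_pos (div_pos (Real.rpow_pos_of_pos hx ε) hεpos)]

/-- Hardy's inequality, first case: for `1 ≤ p < ∞`, `r > 1` and a nonnegative
measurable `f` on `(0,∞)`, with `F x = ∫₀ˣ f`,
`∫₀^∞ x^(-r) F(x)^p dx ≤ (p/(r-1))^p ∫₀^∞ x^(-r) (x f(x))^p dx`. -/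
theorem hardy_inequality_first_case (p r : ℝ) (hp : 1 ≤ p) (hr : 1 < r)
    (f : ℝ → ENNReal) (hf : Measurable f) :
    ∫⁻ x in Ioi (0:ℝ),
        ENNReal.ofReal (x ^ (-r)) * (∫⁻ t in Ioo (0:ℝ) x, f t) ^ p
      ≤ ENNReal.ofReal ((p / (r - 1)) ^ p) *
        ∫⁻ x in Ioi (0:ℝ),
          ENNReal.ofReal (x ^ (-r)) * (ENNReal.ofReal x * f x) ^ p := by
  have hp0 : 0 < p := lt_of_lt_of_le one_pos hp
  have hpne : p ≠ 0 := hp0.ne'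
  set ε : ℝ := (r-1)/p with hε
  have hεpos : 0 < ε := div_pos (by linarith) hp0
  have hεp : ε * p = r - 1 := by rw [hε]; field_simp
  set σ : ℝ := (1-ε)*(p-1) with hσ
  set a : ℝ := ε*(p-1) - r with ha
  have ha1 : a + 1 = -ε := by rw [ha]; nlinarith [hεp]
  set g : ℝ → ENNReal := fun t => f t ^ p * ENNReal.ofReal (t ^ σ) with hg
  have hgm : Measurable g :=
    (ENNReal.continuous_rpow_const.measurable.comp hf).mul
      ((by measurability : Measurable fun t : ℝ => t ^ σ).ennreal_ofReal)
  have hwm : Measurable fun x : ℝ => ENNReal.ofReal (x ^ a) :=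
    (by measurability : Measurable fun x : ℝ => x ^ a).ennreal_ofReal
  calc ∫⁻ x in Ioi (0:ℝ), ENNReal.ofReal (x ^ (-r)) * (∫⁻ t in Ioo (0:ℝ) x, f t) ^ p
      ≤ ∫⁻ x in Ioi (0:ℝ), ENNReal.ofReal (x ^ (-r)) *
          ((∫⁻ t in Ioo (0:ℝ) x, g t) * ENNReal.ofReal ((x ^ ε / ε) ^ (p-1))) := by
        refine lintegral_mono_ae ?_
        filter_upwards [ae_restrict_mem measurableSet_Ioi] with x hx
        exact mul_le_mul_right (hardy_key p r hp hr f hf hx) _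
    _ = ∫⁻ x in Ioi (0:ℝ), ENNReal.ofReal (ε ^ (1-p)) *
          (ENNReal.ofReal (x ^ a) * ∫⁻ t in Ioo (0:ℝ) x, g t) := by
        refine setLIntegral_congr_fun measurableSet_Ioi (fun x hx => ?_)
        have hx0 : (0:ℝ) < x := hx
        have hre : x ^ (-r) * (x ^ ε / ε) ^ (p-1) = ε ^ (1-p) * x ^ a := by
          rw [Real.div_rpow (Real.rpow_nonneg hx0.le _) hεpos.le, ← Real.rpow_mul hx0.le,
            div_eq_mul_inv, ← Real.rpow_neg hεpos.le, show -(p-1) = 1-p by ring,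
            show a = ε*(p-1) + -r from by rw [ha]; ring, Real.rpow_add hx0]
          ring
        calc ENNReal.ofReal (x ^ (-r)) *
              ((∫⁻ t in Ioo (0:ℝ) x, g t) * ENNReal.ofReal ((x ^ ε / ε) ^ (p-1)))
            = ENNReal.ofReal (x ^ (-r) * (x ^ ε / ε) ^ (p-1)) *
                (∫⁻ t in Ioo (0:ℝ) x, g t) := by
              rw [ENNReal.ofReal_mul (Real.rpow_nonneg hx0.le _)]; ring
          _ = ENNReal.ofReal (ε ^ (1-p)) *
                (ENNReal.ofReal (x ^ a) * ∫⁻ t in Ioo (0:ℝ) x, g t) := by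
              rw [hre, ENNReal.ofReal_mul (Real.rpow_nonneg hεpos.le _), mul_assoc]
    _ = ENNReal.ofReal (ε ^ (1-p)) *
          ∫⁻ x in Ioi (0:ℝ), ENNReal.ofReal (x ^ a) * ∫⁻ t in Ioo (0:ℝ) x, g t :=
        lintegral_const_mul' _ _ ENNReal.ofReal_ne_top
    _ = ENNReal.ofReal (ε ^ (1-p)) *
          ∫⁻ t in Ioi (0:ℝ), g t * ∫⁻ x in Ioi t, ENNReal.ofReal (x ^ a) := by
        rw [hardy_swap _ _ hwm hgm]
    _ = ENNReal.ofReal (ε ^ (1-p)) *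
          ∫⁻ t in Ioi (0:ℝ), ENNReal.ofReal (ε⁻¹) *
            (f t ^ p * ENNReal.ofReal (t ^ (p - r))) := by
        congr 1
        refine setLIntegral_congr_fun measurableSet_Ioi (fun t ht => ?_)
        have ht0 : (0:ℝ) < t := ht
        rw [lint_Ioi_rpow (by linarith : a < -1) ht0, ha1, neg_neg]
        have hte : t ^ σ * (t ^ (-ε) / ε) = ε⁻¹ * t ^ (p-r) := by
          rw [div_eq_mul_inv, ← mul_assoc, ← Real.rpow_add ht0,
            show σ + -ε = p - r by rw [hσ]; nlinarith [hεp], mul_comm]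
        rw [hg]
        show f t ^ p * ENNReal.ofReal (t ^ σ) * ENNReal.ofReal (t ^ (-ε) / ε) = _
        rw [mul_assoc, ← ENNReal.ofReal_mul (Real.rpow_nonneg ht0.le _), hte,
          ENNReal.ofReal_mul (inv_nonneg.mpr hεpos.le)]
        ring
    _ = ENNReal.ofReal ((p / (r-1)) ^ p) *
          ∫⁻ t in Ioi (0:ℝ), f t ^ p * ENNReal.ofReal (t ^ (p - r)) := by
        rw [lintegral_const_mul' _ _ ENNReal.ofReal_ne_top, ← mul_assoc,
          ← ENNReal.ofReal_mul (Real.rpow_nonneg hεpos.le _)]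
        congr 2
        rw [← Real.rpow_neg_one ε, ← Real.rpow_add hεpos,
          show (1-p) + (-1) = -p by ring, Real.rpow_neg hεpos.le,
          ← Real.inv_rpow hεpos.le, hε, inv_div]
    _ = ENNReal.ofReal ((p / (r-1)) ^ p) *
          ∫⁻ x in Ioi (0:ℝ), ENNReal.ofReal (x ^ (-r)) * (ENNReal.ofReal x * f x) ^ p := by
        congr 1
        refine setLIntegral_congr_fun measurableSet_Ioi (fun x hx => ?_)
        have hx0 : (0:ℝ) < x := hx
        rw [ENNReal.mul_rpow_of_nonneg _ _ hp0.le,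
          ENNReal.ofReal_rpow_of_pos hx0, ← mul_assoc,
          mul_comm (ENNReal.ofReal (x ^ (-r))) (ENNReal.ofReal (x ^ p)),
          ← ENNReal.ofReal_mul (Real.rpow_nonneg hx0.le _),
          ← Real.rpow_add hx0, show p + -r = p - r by ring, mul_comm]
end

section
/- Hardy's inequality, second case: Let 1 ≤ p < ∞ and r < 1, and let f : (0,∞) → [0,∞) be a measurable function. Define F(x) = ∫ₓ^∞ f(t) dt. Then ∫₀^∞ x^{-r} F(x)^p dx ≤ (p/(1−r))^p · ∫₀^∞ x^{-r} (x·f(x))^p dx. -/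
open MeasureTheory Set

lemma lint_rpow_Ioi {x s : ℝ} (hx : 0 < x) (hs : s < -1) :
    ∫⁻ t in Ioi x, ENNReal.ofReal (t ^ s) = ENNReal.ofReal (x ^ (s + 1) / (-(s + 1))) := by
  rw [← ofReal_integral_eq_lintegral_ofReal (integrableOn_Ioi_rpow_of_lt hs hx)
      ((ae_restrict_iff' measurableSet_Ioi).mpr (Filter.Eventually.of_forall
        fun t ht => Real.rpow_nonneg (hx.trans ht).le s)),
    integral_Ioi_rpow_of_lt hs hx, div_neg, neg_div]

lemma lint_rpow_Ioo {t s : ℝ} (ht : 0 < t) (hs : -1 < s) :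
    ∫⁻ x in Ioo (0:ℝ) t, ENNReal.ofReal (x ^ s) = ENNReal.ofReal (t ^ (s + 1) / (s + 1)) := by
  have h1 : ∫ x in Ioo (0:ℝ) t, x ^ s = t ^ (s + 1) / (s + 1) := by
    rw [Measure.restrict_congr_set Ioo_ae_eq_Ioc,
      ← intervalIntegral.integral_of_le ht.le, integral_rpow (Or.inl hs),
      Real.zero_rpow (by linarith)]
    ring
  rw [← h1, ← ofReal_integral_eq_lintegral_ofReal]
  · exact (intervalIntegrable_iff_integrableOn_Ioo_of_le ht.le).mp
      (intervalIntegral.intervalIntegrable_rpow' hs)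
  · exact (ae_restrict_iff' measurableSet_Ioo).mpr
      (Filter.Eventually.of_forall fun x hx => Real.rpow_nonneg hx.1.le s)

lemma tonelli_swap (φ ψ : ℝ → ENNReal) (hφ : Measurable φ) (hψ : Measurable ψ) :
    ∫⁻ x in Ioi (0:ℝ), φ x * ∫⁻ t in Ioi x, ψ t
      = ∫⁻ t in Ioi (0:ℝ), ψ t * ∫⁻ x in Ioo 0 t, φ x := by
  have key : ∀ x t : ℝ, φ x * (Ioi x).indicator ψ t
      = {p : ℝ × ℝ | p.1 < p.2}.indicator (fun p => φ p.1 * ψ p.2) (x, t) := by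
    intro x t
    by_cases h : x < t <;> simp [Set.indicator_apply, mem_Ioi, h]
  have hmeas : AEMeasurable (Function.uncurry fun x t => φ x * (Ioi x).indicator ψ t)
      ((volume.restrict (Ioi (0:ℝ))).prod (volume.restrict (Ioi (0:ℝ)))) := by
    have : (Function.uncurry fun x t => φ x * (Ioi x).indicator ψ t)
        = {p : ℝ × ℝ | p.1 < p.2}.indicator (fun p => φ p.1 * ψ p.2) := by
      funext p; exact key p.1 p.2
    rw [this]
    exact (((hφ.comp measurable_fst).mul (hψ.comp measurable_snd)).indicator
      (measurableSet_lt measurable_fst measurable_snd)).aemeasurable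
  calc ∫⁻ x in Ioi (0:ℝ), φ x * ∫⁻ t in Ioi x, ψ t
      = ∫⁻ x in Ioi (0:ℝ), ∫⁻ t in Ioi (0:ℝ), φ x * (Ioi x).indicator ψ t := by
        refine setLIntegral_congr_fun measurableSet_Ioi
          (fun x hx => ?_)
        rw [lintegral_const_mul _ (hψ.indicator measurableSet_Ioi),
          lintegral_indicator measurableSet_Ioi _, Measure.restrict_restrict measurableSet_Ioi,
          inter_eq_left.mpr (Ioi_subset_Ioi hx.le)]
    _ = ∫⁻ t in Ioi (0:ℝ), ∫⁻ x in Ioi (0:ℝ), φ x * (Ioi x).indicator ψ t :=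
        lintegral_lintegral_swap hmeas
    _ = ∫⁻ t in Ioi (0:ℝ), ψ t * ∫⁻ x in Ioo 0 t, φ x := by
        refine setLIntegral_congr_fun measurableSet_Ioi
          (fun t ht => ?_)
        have : ∀ x : ℝ, φ x * (Ioi x).indicator ψ t = (Iio t).indicator (fun x => φ x * ψ t) x := by
          intro x
          by_cases h : x < t <;> simp [Set.indicator_apply, mem_Ioi, mem_Iio, h]
        simp_rw [this]
        rw [lintegral_indicator measurableSet_Iio _, Measure.restrict_restrict measurableSet_Iio]
        have : Iio t ∩ Ioi (0:ℝ) = Ioo 0 t := by ext y; simp [mem_Ioo, and_comm]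
        rw [this, lintegral_mul_const _ hφ, mul_comm]

/-- Hardy's inequality, second case: for `1 ≤ p < ∞`, `r < 1` and a nonnegative
measurable `f` on `(0,∞)`, with `F x = ∫ₓ^∞ f`,
`∫₀^∞ x^(-r) F(x)^p dx ≤ (p/(1-r))^p ∫₀^∞ x^(-r) (x f(x))^p dx`. -/
theorem hardy_inequality_second_case (p r : ℝ) (hp : 1 ≤ p) (hr : r < 1)
    (f : ℝ → ENNReal) (hf : Measurable f) :
    ∫⁻ x in Ioi (0:ℝ),
        ENNReal.ofReal (x ^ (-r)) * (∫⁻ t in Ioi x, f t) ^ p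
      ≤ ENNReal.ofReal ((p / (1 - r)) ^ p) *
        ∫⁻ x in Ioi (0:ℝ),
          ENNReal.ofReal (x ^ (-r)) * (ENNReal.ofReal x * f x) ^ p := by
  have h1r : (0:ℝ) < 1 - r := by linarith
  rcases eq_or_lt_of_le hp with hp1 | hp1
  · -- case p = 1
    subst hp1
    simp only [ENNReal.rpow_one, Real.rpow_one]
    rw [tonelli_swap _ f (by fun_prop) hf]
    rw [← lintegral_const_mul' _ _ ENNReal.ofReal_ne_top]
    refine le_of_eq (setLIntegral_congr_fun measurableSet_Ioi
      (fun t ht => ?_))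
    have ht : (0:ℝ) < t := ht
    rw [lint_rpow_Ioo ht (by linarith)]
    have e1 : -r + 1 = 1 - r := by ring
    have e2 : t ^ (1 - r) / (1 - r) = (1 / (1 - r)) * (t ^ (-r) * t) := by
      rw [show t ^ (-r) * t = t ^ (-r) * t ^ (1:ℝ) by rw [Real.rpow_one],
        ← Real.rpow_add ht]
      ring_nf
    rw [e1, e2, ENNReal.ofReal_mul (by positivity), ENNReal.ofReal_mul (by positivity)]
    ring
  · -- case p > 1
    have hp0 : (0:ℝ) < p := lt_trans zero_lt_one hp1
    have hp1' : p - 1 ≠ 0 := by intro h; nlinarith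
    set q : ℝ := p / (p - 1) with hq_def
    have hpq : p.HolderConjugate q := Real.HolderConjugate.conjExponent hp1
    have hq0 : (0:ℝ) < q := hpq.symm.pos
    have hpq_div : p / q = p - 1 := by
      rw [hq_def]; field_simp
    set b : ℝ := (1 - r) / p with hb_def
    have hb : (0:ℝ) < b := by positivity
    have hbp : b * p = 1 - r := by rw [hb_def]; field_simp
    set a : ℝ := (b + 1) * (p - 1) / p with ha_def
    have haq : a * q = b + 1 := by
      rw [ha_def, hq_def]; field_simp
    have hap : a * p = (b + 1) * (p - 1) := by
      rw [ha_def]; field_simp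
    set c0 : ℝ := -r - b * (p - 1) with hc0_def
    have hc0b : c0 + 1 = b := by rw [hc0_def]; nlinarith
    set A : ℝ → ENNReal := fun x => ∫⁻ t in Ioi x, f t ^ p * ENNReal.ofReal (t ^ (a * p))
      with hA_def
    have hmone : Measurable fun t : ℝ => ENNReal.ofReal (t ^ a) := by fun_prop
    have hmtwo : Measurable fun t : ℝ => ENNReal.ofReal (t ^ (-a)) := by fun_prop
    -- pointwise Hoelder bound
    have key : ∀ x ∈ Ioi (0:ℝ),
        ENNReal.ofReal (x ^ (-r)) * (∫⁻ t in Ioi x, f t) ^ p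
          ≤ ENNReal.ofReal (b ^ (-(p / q))) * (ENNReal.ofReal (x ^ c0) * A x) := by
      intro x hx
      have hx : (0:ℝ) < x := hx
      have hF : (∫⁻ t in Ioi x, f t)
          ≤ (A x) ^ (1/p) * (ENNReal.ofReal (x ^ (-b) / b)) ^ (1/q) := by
        have e0 : (∫⁻ t in Ioi x, f t)
            = ∫⁻ t in Ioi x,
                ((fun t => f t * ENNReal.ofReal (t ^ a)) * fun t => ENNReal.ofReal (t ^ (-a))) t := by
          refine setLIntegral_congr_fun measurableSet_Ioi
            (fun t ht => ?_)
          have ht : (0:ℝ) < t := hx.trans ht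
          have : ENNReal.ofReal (t ^ a) * ENNReal.ofReal (t ^ (-a)) = 1 := by
            rw [← ENNReal.ofReal_mul (by positivity), ← Real.rpow_add ht]
            simp
          simp only [Pi.mul_apply, mul_assoc, this, mul_one]
        have hHolder := ENNReal.lintegral_mul_le_Lp_mul_Lq (volume.restrict (Ioi x)) hpq
          (f := fun t => f t * ENNReal.ofReal (t ^ a)) ((hf.mul hmone).aemeasurable) hmtwo.aemeasurable
        rw [← e0] at hHolder
        have eA : ∫⁻ t in Ioi x, (f t * ENNReal.ofReal (t ^ a)) ^ p = A x := by
          refine setLIntegral_congr_fun measurableSet_Ioi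
            (fun t ht => ?_)
          have ht : (0:ℝ) < t := hx.trans ht
          rw [ENNReal.mul_rpow_of_nonneg _ _ hp0.le,
            ENNReal.ofReal_rpow_of_pos (Real.rpow_pos_of_pos ht a), ← Real.rpow_mul ht.le]
        have eB : ∫⁻ t in Ioi x, (ENNReal.ofReal (t ^ (-a))) ^ q
            = ENNReal.ofReal (x ^ (-b) / b) := by
          have e1 : ∫⁻ t in Ioi x, (ENNReal.ofReal (t ^ (-a))) ^ q
              = ∫⁻ t in Ioi x, ENNReal.ofReal (t ^ (-(a*q))) := by
            refine setLIntegral_congr_fun measurableSet_Ioi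
              (fun t ht => ?_)
            have ht : (0:ℝ) < t := hx.trans ht
            rw [ENNReal.ofReal_rpow_of_pos (Real.rpow_pos_of_pos ht _), ← Real.rpow_mul ht.le,
              neg_mul]
          have e2 : -(a*q) + 1 = -b := by rw [haq]; ring
          rw [e1, lint_rpow_Ioi hx (by rw [haq]; linarith), e2, neg_neg]
        calc (∫⁻ t in Ioi x, f t)
            ≤ (∫⁻ t in Ioi x, (f t * ENNReal.ofReal (t ^ a)) ^ p) ^ (1/p)
              * (∫⁻ t in Ioi x, (ENNReal.ofReal (t ^ (-a))) ^ q) ^ (1/q) := hHolder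
          _ = (A x) ^ (1/p) * (ENNReal.ofReal (x ^ (-b) / b)) ^ (1/q) := by rw [eA, eB]
      have hFp : (∫⁻ t in Ioi x, f t) ^ p
          ≤ A x * ENNReal.ofReal (x ^ (-b * (p/q)) * b ^ (-(p/q))) := by
        calc (∫⁻ t in Ioi x, f t) ^ p
            ≤ ((A x) ^ (1/p) * (ENNReal.ofReal (x ^ (-b) / b)) ^ (1/q)) ^ p :=
              ENNReal.rpow_le_rpow hF hp0.le
          _ = A x * ENNReal.ofReal (x ^ (-b * (p/q)) * b ^ (-(p/q))) := by
              rw [ENNReal.mul_rpow_of_nonneg _ _ hp0.le, ← ENNReal.rpow_mul,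
                ← ENNReal.rpow_mul, one_div_mul_cancel hp0.ne', ENNReal.rpow_one,
                show 1/q*p = p/q by ring,
                ENNReal.ofReal_rpow_of_pos (by positivity),
                Real.div_rpow (by positivity) hb.le, ← Real.rpow_mul hx.le,
                Real.rpow_neg hb.le, div_eq_mul_inv]
      calc ENNReal.ofReal (x ^ (-r)) * (∫⁻ t in Ioi x, f t) ^ p
          ≤ ENNReal.ofReal (x ^ (-r))
            * (A x * ENNReal.ofReal (x ^ (-b * (p/q)) * b ^ (-(p/q)))) :=
            mul_le_mul_right hFp _
        _ = ENNReal.ofReal (b ^ (-(p / q))) * (ENNReal.ofReal (x ^ c0) * A x) := by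
            have ex : x ^ (-r) * x ^ (-b * (p/q)) = x ^ c0 := by
              rw [← Real.rpow_add hx, hpq_div, hc0_def]; ring_nf
            rw [ENNReal.ofReal_mul (by positivity), ← ex,
              ENNReal.ofReal_mul (by positivity : (0:ℝ) ≤ x ^ (-r))]
            ring
    calc ∫⁻ x in Ioi (0:ℝ), ENNReal.ofReal (x ^ (-r)) * (∫⁻ t in Ioi x, f t) ^ p
        ≤ ∫⁻ x in Ioi (0:ℝ),
            ENNReal.ofReal (b ^ (-(p / q))) * (ENNReal.ofReal (x ^ c0) * A x) :=
          lintegral_mono_ae ((ae_restrict_iff' measurableSet_Ioi).mpr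
            (Filter.Eventually.of_forall key))
      _ = ENNReal.ofReal (b ^ (-(p / q)))
          * ∫⁻ x in Ioi (0:ℝ), ENNReal.ofReal (x ^ c0) * A x :=
          lintegral_const_mul' _ _ ENNReal.ofReal_ne_top
      _ = ENNReal.ofReal (b ^ (-(p / q)))
          * ∫⁻ t in Ioi (0:ℝ), (f t ^ p * ENNReal.ofReal (t ^ (a * p)))
              * ∫⁻ x in Ioo 0 t, ENNReal.ofReal (x ^ c0) := by
          rw [tonelli_swap _ _ (by fun_prop) (by fun_prop)]
      _ = ENNReal.ofReal (b ^ (-(p / q)))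
          * ∫⁻ t in Ioi (0:ℝ), ENNReal.ofReal (1/b) * (ENNReal.ofReal (t ^ (p - r)) * f t ^ p) := by
          congr 1
          refine setLIntegral_congr_fun measurableSet_Ioi
            (fun t ht => ?_)
          have ht : (0:ℝ) < t := ht
          rw [lint_rpow_Ioo ht (by linarith), hc0b]
          have e3 : t ^ (a*p) * (t ^ b / b) = (1/b) * t ^ (p - r) := by
            rw [div_eq_mul_inv, ← mul_assoc, ← Real.rpow_add ht,
              show a*p + b = p - r by rw [hap]; nlinarith]
            ring
          rw [mul_assoc, ← ENNReal.ofReal_mul (by positivity), e3,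
            ENNReal.ofReal_mul (by positivity)]
          ring
      _ = ENNReal.ofReal (b ^ (-(p / q))) * (ENNReal.ofReal (1/b)
          * ∫⁻ t in Ioi (0:ℝ), ENNReal.ofReal (t ^ (p - r)) * f t ^ p) := by
          rw [lintegral_const_mul' _ _ ENNReal.ofReal_ne_top]
      _ = ENNReal.ofReal ((p / (1 - r)) ^ p)
          * ∫⁻ t in Ioi (0:ℝ), ENNReal.ofReal (t ^ (p - r)) * f t ^ p := by
          rw [← mul_assoc, ← ENNReal.ofReal_mul (by positivity)]
          congr 2
          rw [hpq_div, one_div, ← Real.rpow_neg_one b, ← Real.rpow_add hb,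
            show -(p-1) + -1 = -p by ring, Real.rpow_neg hb.le, ← Real.inv_rpow hb.le,
            hb_def, inv_div]
      _ = ENNReal.ofReal ((p / (1 - r)) ^ p) *
          ∫⁻ x in Ioi (0:ℝ),
            ENNReal.ofReal (x ^ (-r)) * (ENNReal.ofReal x * f x) ^ p := by
          congr 1
          refine setLIntegral_congr_fun measurableSet_Ioi
            (fun t ht => ?_)
          have ht : (0:ℝ) < t := ht
          rw [ENNReal.mul_rpow_of_nonneg _ _ hp0.le, ENNReal.ofReal_rpow_of_pos ht,
            ← mul_assoc, ← ENNReal.ofReal_mul (by positivity), ← Real.rpow_add ht,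
            show -r + p = p - r by ring]
end

section
/- Abstract logarithmic estimate for singular kernels: Let (X, σ) be a measure space, let n, C > 0 be real constants, and let g : X → ℝ be a measurable function such that σ({x ∈ X : g(x) ≤ t}) ≤ C·tⁿ for every t > 0. Then there exists a constant K > 0, depending only on n and C, such that for all real numbers r, δ with 0 < r < δ, if g(x) ≥ r for every x ∈ X, then ∫_{ {x : g(x) < δ} } g(x)^{-n} dσ(x) ≤ K·(1 + log(δ/r)). -/
open MeasureTheory Set

/-- Abstract logarithmic estimate for singular kernels: if `σ {g ≤ t} ≤ C tⁿ` for
all `t > 0`, then there is `K > 0`, depending only on `n` and `C`, such that for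
`0 < r < δ`, if `g ≥ r` everywhere, then
`∫_{g < δ} g^{-n} dσ ≤ K (1 + log(δ/r))`. -/
theorem log_estimate_singular_kernel (n C : ℝ) (hn : 0 < n) (hC : 0 < C) :
    ∃ K : ℝ, 0 < K ∧
      ∀ (X : Type) [MeasurableSpace X] (σ : Measure X) (g : X → ℝ),
        Measurable g →
        (∀ t : ℝ, 0 < t → σ {x | g x ≤ t} ≤ ENNReal.ofReal (C * t ^ n)) →
        ∀ r δ : ℝ, 0 < r → r < δ → (∀ x, r ≤ g x) →
          ∫⁻ x in {x | g x < δ}, ENNReal.ofReal (g x ^ (-n)) ∂σ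
            ≤ ENNReal.ofReal (K * (1 + Real.log (δ / r))) := by
  refine ⟨C * (1 + n), by positivity, ?_⟩
  intro X _ σ g hg hσ r δ hr hrδ hgr
  have hδ : 0 < δ := hr.trans hrδ
  set ν : Measure X := σ.restrict {x | g x < δ} with hν
  have hgpos : ∀ x, 0 < g x := fun x => hr.trans_le (hgr x)
  -- layer cake
  have hmble : AEMeasurable (fun x => g x ^ (-n)) ν := by
    have : Measurable (fun y : ℝ => y ^ (-n)) := by measurability
    exact (this.comp hg).aemeasurable
  have hnn : 0 ≤ᵐ[ν] fun x => g x ^ (-n) :=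
    Filter.Eventually.of_forall fun x => Real.rpow_nonneg (hgpos x).le _
  rw [lintegral_eq_lintegral_meas_lt ν hnn hmble]
  set a : ℝ := δ ^ (-n) with ha
  set b : ℝ := r ^ (-n) with hb
  have hapos : 0 < a := Real.rpow_pos_of_pos hδ _
  have hbpos : 0 < b := Real.rpow_pos_of_pos hr _
  have hab : a < b := Real.rpow_lt_rpow_of_neg hr hrδ (neg_neg_iff_pos.mpr hn)
  have hνle : ∀ s : Set X, ν s ≤ σ s := fun s =>
    Measure.le_iff'.mp Measure.restrict_le_self s
  set F : ℝ → ENNReal := fun t => ν {x | t < g x ^ (-n)} with hF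
  -- split the domain
  have hsplit : (Ioi (0:ℝ)) = Ioc 0 a ∪ (Ioc a b ∪ Ioi b) := by
    rw [Ioc_union_Ioi_eq_Ioi hab.le, Ioc_union_Ioi_eq_Ioi hapos.le]
  have key : ∫⁻ t in Ioi 0, F t
      = (∫⁻ t in Ioc 0 a, F t) + ((∫⁻ t in Ioc a b, F t) + ∫⁻ t in Ioi b, F t) := by
    have hd1 : Disjoint (Ioc (0:ℝ) a) (Ioc a b ∪ Ioi b) := by
      refine Disjoint.union_right ?_ (Ioc_disjoint_Ioi hab.le)
      exact Ioc_disjoint_Ioc.mpr (inf_le_left.trans le_sup_right)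
    rw [hsplit, lintegral_union (measurableSet_Ioc.union measurableSet_Ioi) hd1,
      lintegral_union measurableSet_Ioi (Ioc_disjoint_Ioi le_rfl)]
  -- piece 1
  have hσδ : ν univ ≤ ENNReal.ofReal (C * δ ^ n) := by
    rw [hν, Measure.restrict_apply_univ]
    refine le_trans (measure_mono (setOf_subset_setOf.mpr fun x => le_of_lt)) (hσ δ hδ)
  have piece1 : ∫⁻ t in Ioc 0 a, F t ≤ ENNReal.ofReal C := by
    have hbd : ∀ t ∈ Ioc (0:ℝ) a, F t ≤ ENNReal.ofReal (C * δ ^ n) :=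
      fun t _ => le_trans (measure_mono (subset_univ _)) hσδ
    calc ∫⁻ t in Ioc 0 a, F t ≤ ∫⁻ _ in Ioc 0 a, ENNReal.ofReal (C * δ ^ n) := by
          exact setLIntegral_mono measurable_const hbd
      _ = ENNReal.ofReal (C * δ ^ n) * ENNReal.ofReal a := by
          rw [setLIntegral_const, Real.volume_Ioc, sub_zero]
      _ = ENNReal.ofReal C := by
          rw [← ENNReal.ofReal_mul (by positivity), ha, mul_assoc,
            ← Real.rpow_add hδ, add_neg_cancel, Real.rpow_zero, mul_one]
  -- piece 2
  have piece2 : ∫⁻ t in Ioc a b, F t ≤ ENNReal.ofReal (C * (n * Real.log (δ / r))) := by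
    have hbd : ∀ t ∈ Ioc a b, F t ≤ ENNReal.ofReal (C / t) := by
      intro t ht
      have htpos : 0 < t := hapos.trans ht.1
      have ht' : 0 < t ^ (-(n⁻¹)) := Real.rpow_pos_of_pos htpos _
      have hsub : {x | t < g x ^ (-n)} ⊆ {x | g x ≤ t ^ (-(n⁻¹))} := by
        intro x hx
        have h1 : (g x ^ (-n) : ℝ) ^ (-(n⁻¹)) < t ^ (-(n⁻¹)) :=
          Real.rpow_lt_rpow_of_neg htpos hx (by simp [hn, inv_pos])
        have h2 : (g x ^ (-n) : ℝ) ^ (-(n⁻¹)) = g x := by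
          rw [← Real.rpow_mul (hgpos x).le]
          simp [hn.ne']
        exact le_of_lt (h2 ▸ h1)
      refine le_trans (le_trans (hνle _) (measure_mono hsub)) ?_
      refine le_trans (hσ _ ht') (le_of_eq ?_)
      congr 1
      rw [← Real.rpow_mul htpos.le, show (-(n⁻¹)) * n = -1 by field_simp,
        Real.rpow_neg_one, div_eq_mul_inv]
    calc ∫⁻ t in Ioc a b, F t ≤ ∫⁻ t in Ioc a b, ENNReal.ofReal (C / t) :=
          setLIntegral_mono ((measurable_const.div measurable_id)).ennreal_ofReal hbd
      _ = ENNReal.ofReal (∫ t in a..b, C / t) := by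
          rw [intervalIntegral.integral_of_le hab.le,
            ← ofReal_integral_eq_lintegral_ofReal]
          · refine (ContinuousOn.integrableOn_compact isCompact_Icc ?_).mono_set
              Ioc_subset_Icc_self
            exact continuousOn_const.div continuousOn_id
              (fun t ht => (hapos.trans_le ht.1).ne')
          · filter_upwards [self_mem_ae_restrict measurableSet_Ioc] with t ht
            exact div_nonneg hC.le (hapos.trans ht.1).le
      _ = ENNReal.ofReal (C * (n * Real.log (δ / r))) := by
          congr 1
          have h0 : (0:ℝ) ∉ Set.uIcc a b := by
            rw [Set.uIcc_of_le hab.le]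
            exact fun h => absurd h.1 (not_le.mpr hapos)
          have hba : b / a = (δ / r) ^ n := by
            rw [hb, ha, Real.rpow_neg hr.le, Real.rpow_neg hδ.le,
              Real.div_rpow hδ.le hr.le]
            field_simp
          rw [show (fun t : ℝ => C / t) = fun t => C * (1 / t) by ext t; ring]
          rw [intervalIntegral.integral_const_mul, integral_one_div h0,
            hba, Real.log_rpow (div_pos hδ hr)]
  -- piece 3
  have piece3 : ∫⁻ t in Ioi b, F t = 0 := by
    have : ∀ t ∈ Ioi b, F t = 0 := by
      intro t ht
      have : {x | t < g x ^ (-n)} = ∅ := by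
        ext x
        simp only [mem_setOf_eq, mem_empty_iff_false, iff_false, not_lt]
        exact le_trans (Real.rpow_le_rpow_of_nonpos hr (hgr x) (by linarith)) (le_of_lt ht)
      simp [hF, this]
    calc ∫⁻ t in Ioi b, F t = ∫⁻ _ in Ioi b, 0 := setLIntegral_congr_fun
          measurableSet_Ioi this
      _ = 0 := lintegral_zero
  have hlog : 0 ≤ Real.log (δ / r) :=
    Real.log_nonneg ((one_le_div hr).mpr hrδ.le)
  rw [key, piece3, add_zero]
  refine le_trans (add_le_add piece1 piece2) ?_
  rw [← ENNReal.ofReal_add hC.le (mul_nonneg hC.le (mul_nonneg hn.le hlog))]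
  refine ENNReal.ofReal_le_ofReal ?_
  nlinarith [hn.le, hC.le]
end

section
/- Growth of Lᵠ means of a polynomial on circles (model case of the level-set lemma): Let P be a complex polynomial of degree at most N, let q ≥ 1 be real, and let R ≥ 1. Then ∫₀^{2π} |P(R·e^{iθ})|^q dθ ≤ R^{N·q} · ∫₀^{2π} |P(e^{iθ})|^q dθ. In particular, if N ≥ 1 and 1 ≤ R ≤ 1 + 2/N, then ∫₀^{2π} |P(R·e^{iθ})|^q dθ ≤ e^{2q} · ∫₀^{2π} |P(e^{iθ})|^q dθ, with constant independent of N, P and R. -/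
open MeasureTheory Real intervalIntegral

noncomputable section

namespace PolyCircleAux

open Complex (I)

def eI (t : ℝ) : ℂ := Complex.exp ((t : ℂ) * I)

lemma abs_eI (t : ℝ) : ‖eI t‖ = 1 := Complex.norm_exp_ofReal_mul_I t

lemma eI_ne_zero (t : ℝ) : eI t ≠ 0 := Complex.exp_ne_zero _

lemma continuous_eI : Continuous eI :=
  Complex.continuous_exp.comp (Complex.continuous_ofReal.mul continuous_const)

lemma eI_add (s t : ℝ) : eI (s + t) = eI s * eI t := by
  rw [eI, eI, eI, ← Complex.exp_add]
  congr 1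
  push_cast
  ring

lemma eI_neg (t : ℝ) : eI (-t) = (eI t)⁻¹ := by
  rw [eI, eI, ← Complex.exp_neg]
  congr 1
  push_cast
  ring

lemma eI_two_pi : eI (2 * π) = 1 := by
  rw [eI]; push_cast; exact Complex.exp_two_pi_mul_I

lemma eI_periodic : Function.Periodic eI (2 * π) := by
  intro t; rw [eI_add, eI_two_pi, mul_one]

lemma eI_sub_ne {w : ℂ} (hw : ‖w‖ < 1) (t : ℝ) : eI t - w ≠ 0 := by
  intro h
  rw [sub_eq_zero] at h
  rw [← h, abs_eI] at hw
  exact lt_irrefl _ hw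

lemma one_sub_conj_mul_ne {w z : ℂ} (hw : ‖w‖ < 1) (hz : ‖z‖ ≤ 1) :
    1 - (starRingEnd ℂ) w * z ≠ 0 := by
  intro h
  rw [sub_eq_zero] at h
  have : ‖(starRingEnd ℂ) w * z‖ < 1 := by
    rw [norm_mul, Complex.norm_conj]
    calc ‖w‖ * ‖z‖ ≤ ‖w‖ * 1 :=
          mul_le_mul_of_nonneg_left hz (norm_nonneg w)
      _ < 1 := by simpa using hw
  rw [← h] at this
  simp at this

def pk (w : ℂ) (t : ℝ) : ℝ := (1 - Complex.normSq w) / Complex.normSq (eI t - w)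

lemma pk_nonneg {w : ℂ} (hw : ‖w‖ < 1) (t : ℝ) : 0 ≤ pk w t := by
  apply div_nonneg _ (Complex.normSq_nonneg _)
  rw [Complex.normSq_eq_norm_sq]
  nlinarith [norm_nonneg w]

lemma continuous_pk {w : ℂ} (hw : ‖w‖ < 1) : Continuous (pk w) :=
  continuous_const.div
    (Complex.continuous_normSq.comp (continuous_eI.sub continuous_const))
    (fun t => (Complex.normSq_pos.2 (eI_sub_ne hw t)).ne')

lemma pk_periodic (w : ℂ) : Function.Periodic (pk w) (2 * π) := by
  intro t; rw [pk, pk, eI_periodic]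

lemma pk_coe {w : ℂ} (hw : ‖w‖ < 1) (t : ℝ) :
    (pk w t : ℂ) = eI t * (eI t - w)⁻¹
      + (starRingEnd ℂ) w * eI t * (1 - (starRingEnd ℂ) w * eI t)⁻¹ := by
  have h1 : eI t - w ≠ 0 := eI_sub_ne hw t
  have h2 : 1 - (starRingEnd ℂ) w * eI t ≠ 0 := one_sub_conj_mul_ne hw (abs_eI t).le
  have hz : eI t * (starRingEnd ℂ) (eI t) = 1 := by
    rw [Complex.mul_conj]
    norm_cast
    rw [Complex.normSq_eq_norm_sq, abs_eI]; norm_num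
  have e1 : ((Complex.normSq (eI t - w) : ℝ) : ℂ)
      = (eI t - w) * ((starRingEnd ℂ) (eI t) - (starRingEnd ℂ) w) := by
    rw [← Complex.mul_conj, map_sub]
  have e2 : ((Complex.normSq w : ℝ) : ℂ) = w * (starRingEnd ℂ) w := (Complex.mul_conj w).symm
  rw [pk, Complex.ofReal_div, Complex.ofReal_sub, e1, e2, Complex.ofReal_one]
  have h3 : (starRingEnd ℂ) (eI t) - (starRingEnd ℂ) w ≠ 0 := by
    intro h
    rw [sub_eq_zero] at h
    exact h1 (sub_eq_zero.2 (by simpa using congrArg (starRingEnd ℂ) h))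
  simp only [← div_eq_mul_inv]
  rw [div_add_div _ _ h1 h2, div_eq_div_iff (mul_ne_zero h1 h3) (mul_ne_zero h1 h2)]
  linear_combination ((w * (starRingEnd ℂ) w - 1) * (eI t - w)) * hz

lemma poisson_rep {f : ℂ → ℂ} (hf : Differentiable ℂ f) {w : ℂ} (hw : ‖w‖ < 1) :
    f w = (2 * π : ℝ)⁻¹ • ∫ t in (0:ℝ)..(2 * π), pk w t • f (eI t) := by
  have hball : w ∈ Metric.ball (0 : ℂ) 1 := by
    rw [mem_ball_zero_iff]; exact hw
  have hne : ∀ z : ℂ, ‖z‖ ≤ 1 → 1 - (starRingEnd ℂ) w * z ≠ 0 :=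
    fun z hz => one_sub_conj_mul_ne hw hz
  have hC := Complex.two_pi_I_inv_smul_circleIntegral_sub_inv_smul_of_differentiable_on_off_countable
    (s := ∅) Set.countable_empty hball hf.continuous.continuousOn
    (fun x _ => hf.differentiableAt)
  have hZ : (∮ z in C(0, 1), ((starRingEnd ℂ) w * (1 - (starRingEnd ℂ) w * z)⁻¹) • f z) = 0 := by
    apply Complex.circleIntegral_eq_zero_of_differentiable_on_off_countable zero_le_one
      Set.countable_empty
    · intro z hz
      have hz1 : ‖z‖ ≤ 1 := by
        simpa [Complex.dist_eq] using Metric.mem_closedBall.1 hz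
      exact ((continuousAt_const.mul ((continuousAt_const.sub
        (continuousAt_const.mul continuousAt_id)).inv₀ (hne z hz1))).smul
        hf.continuous.continuousAt).continuousWithinAt
    · intro z hz
      have hz1 : ‖z‖ ≤ 1 := le_of_lt (by simpa [Complex.dist_eq] using hz.1)
      fun_prop (disch := exact hne z hz1)
  have key : ∀ g : ℂ → ℂ, (∮ z in C(0, 1), g z) = ∫ t in (0:ℝ)..(2*π), (eI t * I) * g (eI t) := by
    intro g
    simp only [circleIntegral, deriv_circleMap, circleMap, Complex.ofReal_one, zero_add, one_mul,
      smul_eq_mul, eI]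
  rw [key] at hC hZ
  have hintf : Continuous fun t => f (eI t) := hf.continuous.comp continuous_eI
  have hcA : Continuous fun t => eI t * (eI t - w)⁻¹ * f (eI t) :=
    (continuous_eI.mul ((continuous_eI.sub continuous_const).inv₀
      fun t => eI_sub_ne hw t)).mul hintf
  have hcB : Continuous fun t =>
      (starRingEnd ℂ) w * eI t * (1 - (starRingEnd ℂ) w * eI t)⁻¹ * f (eI t) :=
    ((continuous_const.mul continuous_eI).mul ((continuous_const.sub
      (continuous_const.mul continuous_eI)).inv₀ fun t => hne _ (abs_eI t).le)).mul hintf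
  have hsplit : (∫ t in (0:ℝ)..(2*π), pk w t • f (eI t))
      = (∫ t in (0:ℝ)..(2*π), eI t * (eI t - w)⁻¹ * f (eI t))
        + ∫ t in (0:ℝ)..(2*π),
            (starRingEnd ℂ) w * eI t * (1 - (starRingEnd ℂ) w * eI t)⁻¹ * f (eI t) := by
    rw [← intervalIntegral.integral_add (hcA.intervalIntegrable _ _) (hcB.intervalIntegrable _ _)]
    apply intervalIntegral.integral_congr
    intro t _
    simp only [Complex.real_smul, pk_coe hw t]
    ring
  have hZB : (∫ t in (0:ℝ)..(2*π),
      (starRingEnd ℂ) w * eI t * (1 - (starRingEnd ℂ) w * eI t)⁻¹ * f (eI t)) = 0 := by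
    have h2 : (∫ t in (0:ℝ)..(2*π), I *
        ((starRingEnd ℂ) w * eI t * (1 - (starRingEnd ℂ) w * eI t)⁻¹ * f (eI t))) = 0 := by
      rw [← hZ]
      apply intervalIntegral.integral_congr
      intro t _
      simp only [smul_eq_mul]
      ring
    rw [intervalIntegral.integral_const_mul] at h2
    rcases mul_eq_zero.1 h2 with h | h
    · exact absurd h Complex.I_ne_zero
    · exact h
  have hCA : (∫ t in (0:ℝ)..(2*π), eI t * I * ((eI t - w)⁻¹ • f (eI t)))
      = I * ∫ t in (0:ℝ)..(2*π), eI t * (eI t - w)⁻¹ * f (eI t) := by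
    rw [← intervalIntegral.integral_const_mul]
    apply intervalIntegral.integral_congr
    intro t _
    simp only [smul_eq_mul]
    ring
  rw [hCA] at hC
  rw [hsplit, hZB, add_zero, ← hC]
  rw [Complex.real_smul, smul_eq_mul]
  push_cast
  have h2pi : (2 * (π:ℂ)) ≠ 0 := by
    simp [Real.pi_ne_zero, Complex.ofReal_ne_zero]
  field_simp

lemma pk_mass {w : ℂ} (hw : ‖w‖ < 1) :
    (∫ t in (0:ℝ)..(2 * π), pk w t) = 2 * π := by
  have h := poisson_rep (f := fun _ => (1:ℂ)) (differentiable_const _) hw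
  have : (∫ t in (0:ℝ)..(2*π), (pk w t : ℝ) • (1:ℂ))
      = ((∫ t in (0:ℝ)..(2*π), pk w t : ℝ) : ℂ) := by
    rw [← intervalIntegral.integral_ofReal]
    apply intervalIntegral.integral_congr
    intro t _
    simp [Complex.real_smul]
  rw [this] at h
  have h2 := congrArg Complex.re h
  simp [Complex.ofReal_re] at h2
  field_simp at h2
  rw [show π * 2 = 2 * π from mul_comm _ _] at h2
  linarith [h2]

lemma rep_bound {f : ℂ → ℂ} (hf : Differentiable ℂ f) {w : ℂ} (hw : ‖w‖ < 1) :
    ‖f w‖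
      ≤ (2 * π)⁻¹ * ∫ t in (0:ℝ)..(2 * π), pk w t * ‖f (eI t)‖ := by
  have h2pi : (0:ℝ) ≤ 2 * π := by positivity
  have hintf : Continuous fun t => f (eI t) := hf.continuous.comp continuous_eI
  calc ‖f w‖ = ‖(2 * π : ℝ)⁻¹ • ∫ t in (0:ℝ)..(2 * π), pk w t • f (eI t)‖ := by
        rw [← poisson_rep hf hw]
    _ = (2 * π)⁻¹ * ‖∫ t in (0:ℝ)..(2 * π), pk w t • f (eI t)‖ := by
        rw [norm_smul, Real.norm_of_nonneg (by positivity)]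
    _ ≤ (2 * π)⁻¹ * ∫ t in (0:ℝ)..(2 * π), ‖pk w t • f (eI t)‖ := by
        apply mul_le_mul_of_nonneg_left _ (by positivity)
        exact intervalIntegral.norm_integral_le_integral_norm h2pi
    _ = (2 * π)⁻¹ * ∫ t in (0:ℝ)..(2 * π), pk w t * ‖f (eI t)‖ := by
        congr 1
        apply intervalIntegral.integral_congr
        intro t _
        simp only [norm_smul, Real.norm_of_nonneg (pk_nonneg hw t)]

lemma jensen_rpow {k g : ℝ → ℝ} (hk : Continuous k) (hg : Continuous g)
    (hk0 : ∀ t, 0 ≤ k t) (hg0 : ∀ t, 0 ≤ g t) {q : ℝ} (hq : 1 ≤ q)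
    (hmass : (∫ t in (0:ℝ)..(2 * π), k t) = 2 * π) :
    ((2 * π)⁻¹ * ∫ t in (0:ℝ)..(2 * π), k t * g t) ^ q
      ≤ (2 * π)⁻¹ * ∫ t in (0:ℝ)..(2 * π), k t * g t ^ q := by
  have h2pi : (0:ℝ) < 2 * π := by positivity
  rcases eq_or_lt_of_le hq with heq | hq1
  · simp [← heq, Real.rpow_one]
  have hq0 : q ≠ 0 := by linarith
  set p : ℝ := q / (q - 1) with hp
  have hpq : p.HolderConjugate q :=
    ((Real.holderConjugate_iff_eq_conjExponent hq1).2 rfl).symm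
  have hJ0 : 0 ≤ ∫ t in (0:ℝ)..(2 * π), k t * g t ^ q :=
    intervalIntegral.integral_nonneg h2pi.le
      (fun t _ => mul_nonneg (hk0 t) (Real.rpow_nonneg (hg0 t) q))
  have hI0 : 0 ≤ ∫ t in (0:ℝ)..(2 * π), k t * g t :=
    intervalIntegral.integral_nonneg h2pi.le (fun t _ => mul_nonneg (hk0 t) (hg0 t))
  -- Hölder's inequality on the restricted measure
  set μ : Measure ℝ := volume.restrict (Set.Ioc (0:ℝ) (2 * π)) with hμ
  haveI : IsFiniteMeasure μ := ⟨by
    rw [hμ, Measure.restrict_apply_univ]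
    exact measure_Ioc_lt_top⟩
  have hmem : ∀ (u : ℝ → ℝ), Continuous u → ∀ (r : ENNReal), MemLp u r μ := by
    intro u hu r
    obtain ⟨C, hC⟩ := (isCompact_Icc (a := (0:ℝ)) (b := 2 * π)).exists_bound_of_continuousOn
      hu.continuousOn
    exact MemLp.of_bound hu.aestronglyMeasurable C
      ((ae_restrict_iff' measurableSet_Ioc).2
        (Filter.Eventually.of_forall fun t ht => hC t (Set.Ioc_subset_Icc_self ht)))
  have hck : Continuous fun t => k t ^ (1/p) :=
    hk.rpow_const (fun t => Or.inr hpq.one_div_nonneg)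
  have hckg : Continuous fun t => k t ^ (1/q) * g t :=
    (hk.rpow_const (fun t => Or.inr hpq.symm.one_div_nonneg)).mul hg
  have hHolder := MeasureTheory.integral_mul_le_Lp_mul_Lq_of_nonneg hpq
    (μ := μ) (f := fun t => k t ^ (1/p)) (g := fun t => k t ^ (1/q) * g t)
    (Filter.Eventually.of_forall fun t => Real.rpow_nonneg (hk0 t) _)
    (Filter.Eventually.of_forall fun t => mul_nonneg (Real.rpow_nonneg (hk0 t) _) (hg0 t))
    (hmem _ hck _) (hmem _ hckg _)
  have hsum : 1/p + 1/q = 1 := by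
    rw [one_div, one_div]; exact hpq.inv_add_inv_eq_one
  have e1 : ∀ t : ℝ, k t ^ (1/p) * (k t ^ (1/q) * g t) = k t * g t := by
    intro t
    rw [← mul_assoc, ← Real.rpow_add' (hk0 t) (by rw [hsum]; norm_num), hsum, Real.rpow_one]
  have e2 : ∀ t : ℝ, (k t ^ (1/p)) ^ p = k t := by
    intro t
    rw [← Real.rpow_mul (hk0 t), one_div, inv_mul_cancel₀ hpq.ne_zero, Real.rpow_one]
  have e3 : ∀ t : ℝ, (k t ^ (1/q) * g t) ^ q = k t * g t ^ q := by
    intro t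
    rw [Real.mul_rpow (Real.rpow_nonneg (hk0 t) _) (hg0 t), ← Real.rpow_mul (hk0 t),
      one_div, inv_mul_cancel₀ hq0, Real.rpow_one]
  simp_rw [e1, e2, e3] at hHolder
  have hconv : ∀ (u : ℝ → ℝ), (∫ t in (0:ℝ)..(2 * π), u t) = ∫ t, u t ∂μ := by
    intro u
    rw [intervalIntegral.integral_of_le h2pi.le, hμ]
  rw [← hconv, ← hconv, ← hconv, hmass] at hHolder
  -- final computation
  set J : ℝ := ∫ t in (0:ℝ)..(2 * π), k t * g t ^ q with hJdef
  have hne : (2 * π : ℝ) ^ (1/q) ≠ 0 := (Real.rpow_pos_of_pos h2pi _).ne'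
  have hfin : (2 * π)⁻¹ * ((2 * π) ^ (1/p) * J ^ (1/q)) = ((2 * π)⁻¹ * J) ^ (1/q) := by
    rw [Real.mul_rpow (by positivity) hJ0, Real.inv_rpow h2pi.le,
      show (1/p : ℝ) = 1 - 1/q by linarith, Real.rpow_sub h2pi, Real.rpow_one]
    field_simp
  have hx0 : (0:ℝ) ≤ (2 * π)⁻¹ * J := mul_nonneg (by positivity) hJ0
  calc ((2 * π)⁻¹ * ∫ t in (0:ℝ)..(2 * π), k t * g t) ^ q
      ≤ ((2 * π)⁻¹ * ((2 * π) ^ (1/p) * J ^ (1/q))) ^ q := by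
        apply Real.rpow_le_rpow (by positivity)
          (mul_le_mul_of_nonneg_left hHolder (by positivity)) (by linarith)
    _ = (((2 * π)⁻¹ * J) ^ (1/q)) ^ q := by rw [hfin]
    _ = (2 * π)⁻¹ * J := by
        rw [← Real.rpow_mul hx0, one_div, inv_mul_cancel₀ hq0, Real.rpow_one]

lemma integral_swap_cont (F : ℝ → ℝ → ℝ) (hF : Continuous fun z : ℝ × ℝ => F z.1 z.2) :
    (∫ x in (0:ℝ)..(2 * π), ∫ y in (0:ℝ)..(2 * π), F x y)
      = ∫ y in (0:ℝ)..(2 * π), ∫ x in (0:ℝ)..(2 * π), F x y := by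
  have h2pi : (0:ℝ) ≤ 2 * π := by positivity
  simp_rw [intervalIntegral.integral_of_le h2pi]
  apply MeasureTheory.integral_integral_swap
  rw [Measure.prod_restrict]
  apply MeasureTheory.IntegrableOn.mono_set
    (hF.continuousOn.integrableOn_compact (isCompact_Icc.prod isCompact_Icc))
  exact Set.prod_mono Set.Ioc_subset_Icc_self Set.Ioc_subset_Icc_self

lemma normSq_eI (t : ℝ) : Complex.normSq (eI t) = 1 := by
  rw [Complex.normSq_eq_norm_sq, abs_eI, one_pow]

lemma mean_growth {f : ℂ → ℂ} (hf : Differentiable ℂ f) {r : ℝ} (hr0 : 0 ≤ r) (hr1 : r < 1)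
    {q : ℝ} (hq : 1 ≤ q) :
    (∫ θ in (0:ℝ)..(2 * π), ‖f ((r:ℂ) * eI θ)‖ ^ q)
      ≤ ∫ θ in (0:ℝ)..(2 * π), ‖f (eI θ)‖ ^ q := by
  have h2pi : (0:ℝ) < 2 * π := by positivity
  have hq0 : (0:ℝ) ≤ q := by linarith
  have hwr : ‖(r:ℂ)‖ < 1 := by rwa [Complex.norm_real, Real.norm_eq_abs, abs_of_nonneg hr0]
  have hwθ : ∀ θ : ℝ, ‖(r:ℂ) * eI θ‖ < 1 := fun θ => by
    rw [norm_mul, abs_eI, mul_one]; exact hwr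
  set G : ℝ → ℝ := fun t => ‖f (eI t)‖ with hGdef
  have hGc : Continuous G := continuous_norm.comp (hf.continuous.comp continuous_eI)
  have hG0 : ∀ t, 0 ≤ G t := fun t => norm_nonneg _
  set Gq : ℝ → ℝ := fun t => G t ^ q with hGqdef
  have hGqc : Continuous Gq := hGc.rpow_const fun t => Or.inr hq0
  have hGq0 : ∀ t, 0 ≤ Gq t := fun t => Real.rpow_nonneg (hG0 t) q
  -- kernel shift
  have hmul : ∀ θ t : ℝ, eI θ * eI (t - θ) = eI t := fun θ t => by
    rw [← eI_add]; congr 1; ring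
  have hshift : ∀ θ t : ℝ, pk ((r:ℂ) * eI θ) t = pk (r:ℂ) (t - θ) := by
    intro θ t
    rw [pk, pk]
    congr 1
    · rw [Complex.normSq_mul, normSq_eI, mul_one]
    · rw [show eI t - (r:ℂ) * eI θ = eI θ * (eI (t - θ) - (r:ℂ)) from by
        rw [mul_sub, hmul]; ring, Complex.normSq_mul, normSq_eI, one_mul]
  -- kernel mass (t-integral)
  have hmassθ : ∀ θ : ℝ, (∫ t in (0:ℝ)..(2 * π), pk (r:ℂ) (t - θ)) = 2 * π := by
    intro θ
    rw [intervalIntegral.integral_comp_sub_right (fun s => pk (r:ℂ) s) θ]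
    have := (pk_periodic (r:ℂ)).intervalIntegral_add_eq (-θ) 0
    rw [zero_add, neg_add_eq_sub] at this
    rw [show (0:ℝ) - θ = -θ from by ring, this]
    exact pk_mass hwr
  -- kernel mass (θ-integral)
  have hmasst : ∀ t : ℝ, (∫ θ in (0:ℝ)..(2 * π), pk (r:ℂ) (t - θ)) = 2 * π := by
    intro t
    rw [intervalIntegral.integral_comp_sub_left (fun s => pk (r:ℂ) s) t]
    have := (pk_periodic (r:ℂ)).intervalIntegral_add_eq (t - 2 * π) 0
    rw [zero_add, sub_add_cancel] at this
    rw [sub_zero, this]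
    exact pk_mass hwr
  -- pointwise bound
  have hpt : ∀ θ : ℝ, ‖f ((r:ℂ) * eI θ)‖ ^ q
      ≤ (2 * π)⁻¹ * ∫ t in (0:ℝ)..(2 * π), pk (r:ℂ) (t - θ) * Gq t := by
    intro θ
    have h1 := rep_bound hf (hwθ θ)
    have h1' : ‖f ((r:ℂ) * eI θ)‖
        ≤ (2 * π)⁻¹ * ∫ t in (0:ℝ)..(2 * π), pk (r:ℂ) (t - θ) * G t := by
      refine h1.trans (le_of_eq ?_)
      congr 1
      apply intervalIntegral.integral_congr
      intro t _
      simp only [hshift, hGdef]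
    calc ‖f ((r:ℂ) * eI θ)‖ ^ q
        ≤ ((2 * π)⁻¹ * ∫ t in (0:ℝ)..(2 * π), pk (r:ℂ) (t - θ) * G t) ^ q :=
          Real.rpow_le_rpow (norm_nonneg _) h1' hq0
      _ ≤ (2 * π)⁻¹ * ∫ t in (0:ℝ)..(2 * π), pk (r:ℂ) (t - θ) * Gq t :=
          jensen_rpow ((continuous_pk hwr).comp (continuous_id.sub continuous_const)) hGc
            (fun t => pk_nonneg hwr _) hG0 hq (hmassθ θ)
  -- integrate the pointwise bound
  have hker2 : Continuous fun z : ℝ × ℝ => pk (r:ℂ) (z.2 - z.1) * Gq z.2 :=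
    ((continuous_pk hwr).comp (continuous_snd.sub continuous_fst)).mul
      (hGqc.comp continuous_snd)
  have hstep : (∫ θ in (0:ℝ)..(2 * π), ‖f ((r:ℂ) * eI θ)‖ ^ q)
      ≤ ∫ θ in (0:ℝ)..(2 * π),
          (2 * π)⁻¹ * ∫ t in (0:ℝ)..(2 * π), pk (r:ℂ) (t - θ) * Gq t := by
    apply intervalIntegral.integral_mono_on h2pi.le
    · exact ((continuous_norm.comp (hf.continuous.comp
        (continuous_const.mul continuous_eI))).rpow_const
        (fun t => Or.inr hq0)).intervalIntegrable _ _
    · have hker2u : Continuous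
          (Function.uncurry fun (θ t : ℝ) => pk (r:ℂ) (t - θ) * Gq t) := by exact hker2
      exact (continuous_const.mul
        (intervalIntegral.continuous_parametric_intervalIntegral_of_continuous'
          hker2u 0 (2 * π))).intervalIntegrable _ _
    · exact fun θ _ => hpt θ
  have hswap : (∫ θ in (0:ℝ)..(2 * π), ∫ t in (0:ℝ)..(2 * π), pk (r:ℂ) (t - θ) * Gq t)
      = ∫ t in (0:ℝ)..(2 * π), ∫ θ in (0:ℝ)..(2 * π), pk (r:ℂ) (t - θ) * Gq t :=
    integral_swap_cont (fun θ t => pk (r:ℂ) (t - θ) * Gq t) hker2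
  have hinner : ∀ t : ℝ, (∫ θ in (0:ℝ)..(2 * π), pk (r:ℂ) (t - θ) * Gq t)
      = 2 * π * Gq t := by
    intro t
    rw [intervalIntegral.integral_mul_const, hmasst t]
  calc (∫ θ in (0:ℝ)..(2 * π), ‖f ((r:ℂ) * eI θ)‖ ^ q)
      ≤ ∫ θ in (0:ℝ)..(2 * π),
          (2 * π)⁻¹ * ∫ t in (0:ℝ)..(2 * π), pk (r:ℂ) (t - θ) * Gq t := hstep
    _ = (2 * π)⁻¹ * ∫ θ in (0:ℝ)..(2 * π),
          ∫ t in (0:ℝ)..(2 * π), pk (r:ℂ) (t - θ) * Gq t := by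
        rw [intervalIntegral.integral_const_mul]
    _ = (2 * π)⁻¹ * ∫ t in (0:ℝ)..(2 * π),
          ∫ θ in (0:ℝ)..(2 * π), pk (r:ℂ) (t - θ) * Gq t := by rw [hswap]
    _ = (2 * π)⁻¹ * ∫ t in (0:ℝ)..(2 * π), 2 * π * Gq t := by
        congr 1
        exact intervalIntegral.integral_congr fun t _ => hinner t
    _ = ∫ t in (0:ℝ)..(2 * π), Gq t := by
        rw [intervalIntegral.integral_const_mul, ← mul_assoc,
          inv_mul_cancel₀ h2pi.ne', one_mul]

lemma flip_integral {u : ℝ → ℝ} (hu : Function.Periodic u (2 * π)) :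
    (∫ θ in (0:ℝ)..(2 * π), u (-θ)) = ∫ θ in (0:ℝ)..(2 * π), u θ := by
  rw [intervalIntegral.integral_comp_neg, neg_zero]
  have h := hu.intervalIntegral_add_eq (-(2 * π)) 0
  rw [zero_add, show -(2 * π) + 2 * π = (0:ℝ) from by ring] at h
  exact h

lemma main_ineq (N : ℕ) (P : Polynomial ℂ) (hP : P.natDegree ≤ N) {q : ℝ} (hq : 1 ≤ q)
    {R : ℝ} (hR : 1 ≤ R) :
    (∫ θ in (0:ℝ)..(2 * π), ‖P.eval ((R : ℂ) * eI θ)‖ ^ q)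
      ≤ R ^ ((N : ℝ) * q) * ∫ θ in (0:ℝ)..(2 * π), ‖P.eval (eI θ)‖ ^ q := by
  have h2pi : (0:ℝ) < 2 * π := by positivity
  have hq0 : (0:ℝ) ≤ q := by linarith
  rcases eq_or_lt_of_le hR with hR1 | hR1
  · rw [← hR1]
    simp only [Complex.ofReal_one, one_mul, Real.one_rpow]
    exact le_refl _
  have hRpos : (0:ℝ) < R := by linarith
  set H : ℂ → ℂ := fun w => ∑ k ∈ Finset.range (N+1), P.coeff k * w ^ (N - k) with hHdef
  have hHdiff : Differentiable ℂ H :=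
    Differentiable.fun_sum fun k _ => (differentiable_const _).mul (differentiable_pow _)
  have heval : ∀ v : ℂ, v ≠ 0 → P.eval v = v ^ N * H v⁻¹ := by
    intro v hv
    rw [Polynomial.eval_eq_sum_range' (lt_of_le_of_lt hP (Nat.lt_succ_self N)), hHdef,
      Finset.mul_sum]
    apply Finset.sum_congr rfl
    intro k hk
    have hkN : k ≤ N := Nat.lt_succ_iff.mp (Finset.mem_range.mp hk)
    have hsplit : v ^ N = v ^ (N - k) * v ^ k := by rw [← pow_add]; congr 1; omega
    have hcan : v ^ (N - k) * (v⁻¹) ^ (N - k) = 1 := by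
      rw [← mul_pow, mul_inv_cancel₀ hv, one_pow]
    conv_rhs => rw [hsplit]
    rw [show v ^ (N - k) * v ^ k * (P.coeff k * (v⁻¹) ^ (N - k))
      = v ^ (N - k) * (v⁻¹) ^ (N - k) * (P.coeff k * v ^ k) from by ring, hcan, one_mul]
  have habs1 : ∀ θ : ℝ, ‖P.eval (eI θ)‖ = ‖H (eI (-θ))‖ := by
    intro θ
    rw [heval _ (eI_ne_zero θ), norm_mul, norm_pow, abs_eI, one_pow, one_mul, ← eI_neg]
  have habsR : ∀ θ : ℝ, ‖P.eval ((R:ℂ) * eI θ)‖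
      = R ^ N * ‖H (((R⁻¹ : ℝ) : ℂ) * eI (-θ))‖ := by
    intro θ
    have hv : (R:ℂ) * eI θ ≠ 0 :=
      mul_ne_zero (by exact_mod_cast hRpos.ne') (eI_ne_zero θ)
    have hinv : ((R:ℂ) * eI θ)⁻¹ = ((R⁻¹ : ℝ) : ℂ) * eI (-θ) := by
      rw [mul_inv, eI_neg]; push_cast; ring
    rw [heval _ hv, norm_mul, norm_pow, norm_mul, Complex.norm_real, Real.norm_eq_abs, abs_eI, mul_one,
      abs_of_pos hRpos, hinv]
  have hrange : (0:ℝ) ≤ R⁻¹ := by positivity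
  have hrlt : R⁻¹ < 1 := inv_lt_one_of_one_lt₀ hR1
  have hper1 : Function.Periodic
      (fun θ : ℝ => ‖H (((R⁻¹ : ℝ) : ℂ) * eI θ)‖ ^ q) (2 * π) := by
    intro x; simp only [eI_periodic x]
  have hper2 : Function.Periodic (fun θ : ℝ => ‖H (eI θ)‖ ^ q) (2 * π) := by
    intro x; simp only [eI_periodic x]
  have hgrow := mean_growth hHdiff hrange hrlt hq
  have hRNq : ((R ^ N : ℝ)) ^ q = R ^ ((N : ℝ) * q) := by
    rw [Real.rpow_mul hRpos.le, Real.rpow_natCast]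
  calc (∫ θ in (0:ℝ)..(2 * π), ‖P.eval ((R : ℂ) * eI θ)‖ ^ q)
      = ∫ θ in (0:ℝ)..(2 * π),
          (R ^ N) ^ q * ‖H (((R⁻¹ : ℝ) : ℂ) * eI (-θ))‖ ^ q := by
        apply intervalIntegral.integral_congr
        intro θ _
        simp only [habsR θ]
        rw [Real.mul_rpow (by positivity) (norm_nonneg _)]
    _ = (R ^ N) ^ q * ∫ θ in (0:ℝ)..(2 * π),
          ‖H (((R⁻¹ : ℝ) : ℂ) * eI (-θ))‖ ^ q := by
        rw [intervalIntegral.integral_const_mul]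
    _ = (R ^ N) ^ q * ∫ θ in (0:ℝ)..(2 * π),
          ‖H (((R⁻¹ : ℝ) : ℂ) * eI θ)‖ ^ q := by
        rw [flip_integral hper1]
    _ ≤ (R ^ N) ^ q * ∫ θ in (0:ℝ)..(2 * π), ‖H (eI θ)‖ ^ q := by
        apply mul_le_mul_of_nonneg_left hgrow (by positivity)
    _ = (R ^ N) ^ q * ∫ θ in (0:ℝ)..(2 * π), ‖H (eI (-θ))‖ ^ q := by
        rw [flip_integral hper2]
    _ = R ^ ((N : ℝ) * q) * ∫ θ in (0:ℝ)..(2 * π), ‖P.eval (eI θ)‖ ^ q := by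
        rw [hRNq]
        congr 1
        apply intervalIntegral.integral_congr
        intro θ _
        simp only [habs1 θ]

end PolyCircleAux

open PolyCircleAux

/-- Growth of `L^q` means of a polynomial on circles: if `deg P ≤ N`, `q ≥ 1`,
`R ≥ 1`, then `∫₀^{2π} |P(R e^{iθ})|^q dθ ≤ R^{Nq} ∫₀^{2π} |P(e^{iθ})|^q dθ`;
in particular for `N ≥ 1` and `1 ≤ R ≤ 1 + 2/N` the constant is at most `e^{2q}`. -/
theorem polynomial_circle_Lq_growth (N : ℕ) (P : Polynomial ℂ)
    (hP : P.natDegree ≤ N) (q : ℝ) (hq : 1 ≤ q) :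
    (∀ R : ℝ, 1 ≤ R →
      (∫ θ in (0:ℝ)..(2 * Real.pi),
          ‖P.eval ((R : ℂ) * Complex.exp ((θ : ℂ) * Complex.I))‖ ^ q)
        ≤ R ^ ((N : ℝ) * q) *
          ∫ θ in (0:ℝ)..(2 * Real.pi),
            ‖P.eval (Complex.exp ((θ : ℂ) * Complex.I))‖ ^ q) ∧
    (1 ≤ N → ∀ R : ℝ, 1 ≤ R → R ≤ 1 + 2 / (N : ℝ) →
      (∫ θ in (0:ℝ)..(2 * Real.pi),
          ‖P.eval ((R : ℂ) * Complex.exp ((θ : ℂ) * Complex.I))‖ ^ q)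
        ≤ Real.exp (2 * q) *
          ∫ θ in (0:ℝ)..(2 * Real.pi),
            ‖P.eval (Complex.exp ((θ : ℂ) * Complex.I))‖ ^ q) := by
  have h2pi : (0:ℝ) < 2 * π := by positivity
  have hq0 : (0:ℝ) ≤ q := by linarith
  have hmain : ∀ R : ℝ, 1 ≤ R →
      (∫ θ in (0:ℝ)..(2 * Real.pi),
          ‖P.eval ((R : ℂ) * Complex.exp ((θ : ℂ) * Complex.I))‖ ^ q)
        ≤ R ^ ((N : ℝ) * q) *
          ∫ θ in (0:ℝ)..(2 * Real.pi),
            ‖P.eval (Complex.exp ((θ : ℂ) * Complex.I))‖ ^ q := by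
    intro R hR
    exact main_ineq N P hP hq hR
  refine ⟨hmain, ?_⟩
  intro hN R hR hR2
  have hint0 : 0 ≤ ∫ θ in (0:ℝ)..(2 * Real.pi),
      ‖P.eval (Complex.exp ((θ : ℂ) * Complex.I))‖ ^ q :=
    intervalIntegral.integral_nonneg h2pi.le
      (fun θ _ => Real.rpow_nonneg (norm_nonneg _) q)
  have hN0 : ((N:ℝ)) ≠ 0 := by
    have : (1:ℝ) ≤ (N:ℝ) := by exact_mod_cast hN
    linarith
  have hRN : R ^ N ≤ Real.exp 2 := by
    calc R ^ N ≤ (1 + 2 / (N:ℝ)) ^ N := pow_le_pow_left₀ (by linarith) hR2 N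
      _ ≤ Real.exp (2 / (N:ℝ)) ^ N := by
          apply pow_le_pow_left₀ (by positivity)
          linarith [Real.add_one_le_exp (2 / (N:ℝ))]
      _ = Real.exp 2 := by
          rw [← Real.exp_nat_mul]
          congr 1
          field_simp
  have hexp : R ^ ((N : ℝ) * q) ≤ Real.exp (2 * q) := by
    rw [Real.rpow_mul (by linarith : (0:ℝ) ≤ R), Real.rpow_natCast, Real.exp_mul]
    exact Real.rpow_le_rpow (by positivity) hRN hq0
  exact (hmain R hR).trans (mul_le_mul_of_nonneg_right hexp hint0)
end
end
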